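/- arXiv:2311.01581 — 2 statements merged into one kernel-verified Lean document; each statement's English description precedes it below -/
import Mathlib

section
/- Sufficiency of the domination upper bound for PALS labels: if Δc_max(l₁, l₂) < 0, then for every t ≥ t_req the cost difference c(ι₁, t) - c(ι₂, t) of the corresponding PALS insertions is negative, where c(ι_i, t) = (t_arr(ι_i,t) - T) + τ·(t_arr(ι_i,t) + w'_i - t_req) + ω·(w_i + w'_i) + γ_wait·max(t_dep(p_i,t) - t_req - t_wait_max, 0) + γ_trip·max(t_arr(ι_i,t) + w'_i - t_req - t_trip_max, 0), with t_dep(p_i,t) = max(t + δ_i, t_req + w_i) and t_arr(ι_i,t) = t_dep(p_i,t) + π_i. -/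
lemma max_sub_max_le (x y : ℝ) : max x 0 - max y 0 ≤ max (x - y) 0 := by
  rcases le_total x 0 with h | h <;> rcases le_total y 0 with h' | h' <;>
    simp [max_eq_left, max_eq_right, *] <;>
  · rcases le_total (x - y) 0 with h'' | h'' <;>
      simp [max_eq_left, max_eq_right, *] <;> linarith

/-- Sufficiency of the domination upper bound for PALS labels.
If `Δc_max(l₁, l₂) < 0` then for every vehicle arrival time `t ≥ t_req` the cost
difference of the corresponding PALS insertions is negative. -/
theorem pals_domination_sufficient
    (τ ω γwait γtrip twaitmax ttripmax treq T : ℝ)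
    (hτ : 0 ≤ τ) (hω : 0 ≤ ω) (hγw : 0 ≤ γwait) (hγt : 0 ≤ γtrip)
    (hwm : 0 ≤ twaitmax) (htm : 0 ≤ ttripmax)
    (δ₁ δ₂ w₁ w₂ w₁' w₂' π₁ π₂ : ℝ)
    (hδ₁ : 0 ≤ δ₁) (hδ₂ : 0 ≤ δ₂) (hw₁ : 0 ≤ w₁) (hw₂ : 0 ≤ w₂)
    (hw₁' : 0 ≤ w₁') (hw₂' : 0 ≤ w₂') (hπ₁ : 0 ≤ π₁) (hπ₂ : 0 ≤ π₂)
    -- Δc_max(l₁,l₂) < 0 :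
    (hdom :
      ((max δ₁ w₁ - δ₂) + π₁ - π₂) +
      τ * (((max δ₁ w₁ - δ₂) + π₁ - π₂) + w₁' - w₂') +
      ω * ((w₁ + w₁') - (w₂ + w₂')) +
      γwait * max (max δ₁ w₁ - δ₂) 0 +
      γtrip * max (((max δ₁ w₁ - δ₂) + π₁ - π₂) + w₁' - w₂') 0 < 0) :
    ∀ t : ℝ, treq ≤ t →
      ((max (t + δ₁) (treq + w₁) + π₁ - T) +
        τ * (max (t + δ₁) (treq + w₁) + π₁ + w₁' - treq) +
        ω * (w₁ + w₁') +
        γwait * max (max (t + δ₁) (treq + w₁) - treq - twaitmax) 0 +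
        γtrip * max (max (t + δ₁) (treq + w₁) + π₁ + w₁' - treq - ttripmax) 0) -
      ((max (t + δ₂) (treq + w₂) + π₂ - T) +
        τ * (max (t + δ₂) (treq + w₂) + π₂ + w₂' - treq) +
        ω * (w₂ + w₂') +
        γwait * max (max (t + δ₂) (treq + w₂) - treq - twaitmax) 0 +
        γtrip * max (max (t + δ₂) (treq + w₂) + π₂ + w₂' - treq - ttripmax) 0) < 0 := by
  intro t ht
  set D₁ := max (t + δ₁) (treq + w₁) with hD₁
  set D₂ := max (t + δ₂) (treq + w₂) with hD₂
  -- key: D₁ - D₂ ≤ max δ₁ w₁ - δ₂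
  have hkey : D₁ - D₂ ≤ max δ₁ w₁ - δ₂ := by
    have h1 : D₁ ≤ t + max δ₁ w₁ := by
      apply max_le
      · exact add_le_add (le_refl t) (le_max_left _ _)
      · exact add_le_add (by linarith) (le_max_right _ _)
    have h2 : t + δ₂ ≤ D₂ := le_max_left _ _
    linarith
  -- bound the γwait max difference
  have hw : max (D₁ - treq - twaitmax) 0 - max (D₂ - treq - twaitmax) 0 ≤
      max (max δ₁ w₁ - δ₂) 0 := by
    refine le_trans (max_sub_max_le _ _) ?_
    have : (D₁ - treq - twaitmax) - (D₂ - treq - twaitmax) = D₁ - D₂ := by ring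
    rw [this]
    exact max_le_max hkey le_rfl
  -- bound the γtrip max difference
  have htr : max (D₁ + π₁ + w₁' - treq - ttripmax) 0 -
      max (D₂ + π₂ + w₂' - treq - ttripmax) 0 ≤
      max (((max δ₁ w₁ - δ₂) + π₁ - π₂) + w₁' - w₂') 0 := by
    refine le_trans (max_sub_max_le _ _) ?_
    apply max_le_max _ le_rfl
    linarith
  have hτm : τ * ((D₁ + π₁ + w₁' - treq) - (D₂ + π₂ + w₂' - treq)) ≤
      τ * (((max δ₁ w₁ - δ₂) + π₁ - π₂) + w₁' - w₂') :=
    mul_le_mul_of_nonneg_left (by linarith) hτ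
  have hγwm : γwait * (max (D₁ - treq - twaitmax) 0 - max (D₂ - treq - twaitmax) 0) ≤
      γwait * max (max δ₁ w₁ - δ₂) 0 := mul_le_mul_of_nonneg_left hw hγw
  have hγtm : γtrip * (max (D₁ + π₁ + w₁' - treq - ttripmax) 0 -
      max (D₂ + π₂ + w₂' - treq - ttripmax) 0) ≤
      γtrip * max (((max δ₁ w₁ - δ₂) + π₁ - π₂) + w₁' - w₂') 0 :=
    mul_le_mul_of_nonneg_left htr hγt
  rw [mul_sub] at hτm hγwm hγtm
  linarith
end

section
/- DALS domination correctness: suppose label l₁ = (d₁, δ₁) dominates label l₂ = (d₂, δ₂) at vertex v, meaning (with Δ = δ₁ - δ₂, Δw = w'₁ - w'₂, Δ_trip = Δ + Δw): both Δ + τ·Δ_trip + ω·Δw < 0 and Δ + (τ + γ_trip)·Δ_trip + ω·Δw < 0. Then for any two DALS insertions ι₁, ι₂ that share the same pickup detour (hence equal added-trip-time and wait-penalty terms) and whose last-stop-to-dropoff distances satisfy D₁ - D₂ ≤ δ₁ - δ₂, the costs satisfy c(ι₁) < c(ι₂), where c(ι_z) = base + D_z + τ·(t₀ + D_z + w'_z)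 + ω·(W + w'_z) + γ_trip·max(t₀ + D_z + w'_z - t_max, 0) for some common constants base, t₀, W, t_max. -/
/-- DALS domination correctness: if label `l₁ = (d₁, δ₁)` dominates
`l₂ = (d₂, δ₂)` and `D₁ - D₂ ≤ δ₁ - δ₂`, then the corresponding DALS insertion
costs satisfy `c(ι₁) < c(ι₂)`. -/
theorem dals_domination_correct
    (τ ω γtrip : ℝ) (hτ : 0 ≤ τ) (hω : 0 ≤ ω) (hγ : 0 ≤ γtrip)
    (δ₁ δ₂ w₁' w₂' : ℝ)
    (hδ₁ : 0 ≤ δ₁) (hδ₂ : 0 ≤ δ₂) (hw₁' : 0 ≤ w₁') (hw₂' : 0 ≤ w₂')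
    (D₁ D₂ base t₀ W tmax : ℝ)
    (hdist : D₁ - D₂ ≤ δ₁ - δ₂)
    (hdom1 : (δ₁ - δ₂) + τ * ((δ₁ - δ₂) + (w₁' - w₂')) + ω * (w₁' - w₂') < 0)
    (hdom2 : (δ₁ - δ₂) + (τ + γtrip) * ((δ₁ - δ₂) + (w₁' - w₂')) +
      ω * (w₁' - w₂') < 0) :
    base + D₁ + τ * (t₀ + D₁ + w₁') + ω * (W + w₁') +
      γtrip * max (t₀ + D₁ + w₁' - tmax) 0 <
    base + D₂ + τ * (t₀ + D₂ + w₂') + ω * (W + w₂') +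
      γtrip * max (t₀ + D₂ + w₂' - tmax) 0 := by
  have h1 : max (t₀ + D₁ + w₁' - tmax) 0 ≤
      max (t₀ + D₂ + w₂' - tmax) 0 + max ((D₁ - D₂) + (w₁' - w₂')) 0 := by
    apply max_le
    · nlinarith [le_max_left (t₀ + D₂ + w₂' - tmax) (0:ℝ),
        le_max_left ((D₁ - D₂) + (w₁' - w₂')) (0:ℝ)]
    · nlinarith [le_max_right (t₀ + D₂ + w₂' - tmax) (0:ℝ),
        le_max_right ((D₁ - D₂) + (w₁' - w₂')) (0:ℝ)]
  rcases le_or_gt ((D₁ - D₂) + (w₁' - w₂')) 0 with h | h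
  · rw [max_eq_right h] at h1
    nlinarith [mul_le_mul_of_nonneg_left h1 hγ]
  · rw [max_eq_left h.le] at h1
    nlinarith [mul_le_mul_of_nonneg_left h1 hγ, mul_le_mul_of_nonneg_left hdist hτ,
      mul_le_mul_of_nonneg_left hdist hγ]
end
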